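/- With Z = (Z_1,…,Z_m) having i.i.d. Gumbel(0,1) coordinates: for every i ∈ {1,…,m}, lim_{τ→∞} Var_Z(∂_{θ_i} G(h_τ(Z,θ))) = 0. -/

import Mathlib

open Real Finset Filter MeasureTheory Set

/-- The Gumbel(0,1) measure on ℝ, with Lebesgue density `exp(−x − exp(−x))`. -/
noncomputable def gumbel : Measure ℝ :=
  volume.withDensity fun x => ENNReal.ofReal (Real.exp (-x - Real.exp (-x)))

lemma gdens_hasDeriv (x : ℝ) :
    HasDerivAt (fun x : ℝ => Real.exp (-Real.exp (-x)))
      (Real.exp (-x - Real.exp (-x))) x := by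
  have h1 : HasDerivAt (fun x : ℝ => -Real.exp (-x)) (Real.exp (-x)) x := by
    simpa using ((hasDerivAt_neg x).exp.fun_neg)
  have := h1.exp
  simpa [Real.exp_add, sub_eq_add_neg, mul_comm] using this

lemma gdens_integrableOn_Ioi :
    IntegrableOn (fun x : ℝ => Real.exp (-x - Real.exp (-x))) (Ioi 0) ∧
    ∫ x in Ioi (0:ℝ), Real.exp (-x - Real.exp (-x)) = 1 - Real.exp (-1) := by
  have hderiv : ∀ x ∈ Ici (0:ℝ), HasDerivAt (fun x : ℝ => Real.exp (-Real.exp (-x)))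
      (Real.exp (-x - Real.exp (-x))) x := fun x _ => gdens_hasDeriv x
  have hpos : ∀ x ∈ Ioi (0:ℝ), 0 ≤ Real.exp (-x - Real.exp (-x)) := fun x _ => (Real.exp_pos _).le
  have htend : Tendsto (fun x : ℝ => Real.exp (-Real.exp (-x))) atTop (nhds 1) := by
    have : Tendsto (fun x : ℝ => -Real.exp (-x)) atTop (nhds 0) := by
      simpa using (Real.tendsto_exp_neg_atTop_nhds_zero.neg)
    simpa [Function.comp_def] using (Real.continuous_exp.continuousAt.tendsto.comp this)
  refine ⟨integrableOn_Ioi_deriv_of_nonneg' hderiv hpos htend, ?_⟩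
  have := integral_Ioi_of_hasDerivAt_of_nonneg' hderiv hpos htend
  simpa using this

lemma gdens_integrableOn_Ioi_neg :
    IntegrableOn (fun x : ℝ => Real.exp (-(-x) - Real.exp (-(-x)))) (Ioi 0) ∧
    ∫ x in Ioi (0:ℝ), Real.exp (-(-x) - Real.exp (-(-x))) = Real.exp (-1) := by
  have hderiv : ∀ x ∈ Ici (0:ℝ), HasDerivAt (fun x : ℝ => -Real.exp (-Real.exp x))
      (Real.exp (-(-x) - Real.exp (-(-x)))) x := by
    intro x _
    have h1 : HasDerivAt (fun x : ℝ => -Real.exp x) (-Real.exp x) x := (Real.hasDerivAt_exp x).neg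
    have := h1.exp.fun_neg
    simpa [Real.exp_add, sub_eq_add_neg, mul_comm] using this
  have hpos : ∀ x ∈ Ioi (0:ℝ), 0 ≤ Real.exp (-(-x) - Real.exp (-(-x))) :=
    fun x _ => (Real.exp_pos _).le
  have htend : Tendsto (fun x : ℝ => -Real.exp (-Real.exp x)) atTop (nhds 0) := by
    have h2 : Tendsto (fun x : ℝ => -Real.exp x) atTop atBot := tendsto_neg_atTop_atBot.comp Real.tendsto_exp_atTop
    simpa using ((Real.tendsto_exp_atBot.comp h2).neg)
  refine ⟨integrableOn_Ioi_deriv_of_nonneg' hderiv hpos htend, ?_⟩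
  have := integral_Ioi_of_hasDerivAt_of_nonneg' hderiv hpos htend
  simpa using this

lemma gdens_integrableOn_Iic :
    IntegrableOn (fun x : ℝ => Real.exp (-x - Real.exp (-x))) (Iic 0) ∧
    ∫ x in Iic (0:ℝ), Real.exp (-x - Real.exp (-x)) = Real.exp (-1) := by
  constructor
  · rw [← Measure.map_neg_eq_self (volume : Measure ℝ)]
    have m : MeasurableEmbedding fun x : ℝ => -x := (Homeomorph.neg ℝ).measurableEmbedding
    show IntegrableOn _ _ (Measure.map (fun x : ℝ => -x) volume)
    rw [m.integrableOn_map_iff]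
    simp only [Function.comp_def, neg_preimage, neg_Iic, neg_zero]
    exact (integrableOn_Ici_iff_integrableOn_Ioi (b := 0)).mpr gdens_integrableOn_Ioi_neg.1
  · rw [← neg_zero, ← integral_comp_neg_Ioi]
    simpa using gdens_integrableOn_Ioi_neg.2

lemma gdens_integrable : Integrable (fun x : ℝ => Real.exp (-x - Real.exp (-x))) := by
  rw [← integrableOn_univ, ← Iic_union_Ioi (a := (0:ℝ))]
  exact gdens_integrableOn_Iic.1.union gdens_integrableOn_Ioi.1

lemma gdens_integral : ∫ x : ℝ, Real.exp (-x - Real.exp (-x)) = 1 := by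
  rw [← intervalIntegral.integral_Iic_add_Ioi (b := (0:ℝ)) gdens_integrableOn_Iic.1 gdens_integrableOn_Ioi.1,
    gdens_integrableOn_Iic.2, gdens_integrableOn_Ioi.2]
  ring

instance : IsProbabilityMeasure gumbel := by
  constructor
  rw [gumbel, withDensity_apply _ MeasurableSet.univ, Measure.restrict_univ,
    ← MeasureTheory.ofReal_integral_eq_lintegral_ofReal gdens_integrable
      (Filter.Eventually.of_forall fun x => (Real.exp_pos _).le),
    gdens_integral]
  simp


/-- The law of `Z = (Z_1,…,Z_m)` with i.i.d. Gumbel(0,1) coordinates. -/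
noncomputable def gumbelPi (m : ℕ) : Measure (Fin m → ℝ) :=
  Measure.pi fun _ => gumbel

instance (m : ℕ) : IsProbabilityMeasure (gumbelPi m) := by
  rw [gumbelPi]; infer_instance


/-- Softmax weight `w_i^τ(z,θ) = exp((log θ_i + z_i)/τ) / ∑_j exp((log θ_j + z_j)/τ)`. -/
noncomputable def softW {m : ℕ} (τ : ℝ) (θ z : Fin m → ℝ) (i : Fin m) : ℝ :=
  Real.exp ((Real.log (θ i) + z i) / τ) / ∑ j, Real.exp ((Real.log (θ j) + z j) / τ)

/-- Smoothed action `h_τ(z,θ) = ∑_i a_i · w_i^τ(z,θ)`. -/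
noncomputable def hTau {m : ℕ} (τ : ℝ) (a θ z : Fin m → ℝ) : ℝ :=
  ∑ i, a i * softW τ θ z i

lemma S_pos {m : ℕ} [NeZero m] (τ : ℝ) (θ z : Fin m → ℝ) :
    0 < ∑ j, Real.exp ((Real.log (θ j) + z j) / τ) :=
  Finset.sum_pos (fun j _ => Real.exp_pos _) Finset.univ_nonempty

lemma hTau_eq_div {m : ℕ} (τ : ℝ) (a θ z : Fin m → ℝ) :
    hTau τ a θ z = (∑ j, a j * Real.exp ((Real.log (θ j) + z j) / τ)) /
      ∑ j, Real.exp ((Real.log (θ j) + z j) / τ) := by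
  rw [hTau, Finset.sum_div]
  exact Finset.sum_congr rfl fun j _ => by rw [softW, mul_div_assoc]

lemma hTau_hasDerivAt {m : ℕ} [NeZero m] (τ : ℝ) (hτ : τ ≠ 0) (a θ z : Fin m → ℝ)
    (i : Fin m) (hθi : 0 < θ i) :
    HasDerivAt (fun t : ℝ => hTau τ a (Function.update θ i t) z)
      (softW τ θ z i / (τ * θ i) * (a i - hTau τ a θ z)) (θ i) := by
  set t0 := θ i with ht0
  have hEi : HasDerivAt (fun t : ℝ => Real.exp ((Real.log t + z i) / τ))
      (Real.exp ((Real.log t0 + z i) / τ) * (1 / (τ * t0))) t0 := by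
    have h1 : HasDerivAt (fun t : ℝ => (Real.log t + z i) / τ) (1 / (τ * t0)) t0 := by
      have := ((Real.hasDerivAt_log hθi.ne').add_const (z i)).div_const τ
      simpa [one_div, mul_inv, mul_comm, div_eq_mul_inv] using this
    simpa [mul_comm] using h1.exp
  have hE : ∀ j : Fin m, HasDerivAt
      (fun t : ℝ => Real.exp ((Real.log (Function.update θ i t j) + z j) / τ))
      (if j = i then Real.exp ((Real.log (θ i) + z i) / τ) * (1 / (τ * t0)) else 0) t0 := by
    intro j
    by_cases hj : j = i
    · subst hj
      simpa using hEi
    · simp only [Function.update_of_ne hj, if_neg hj]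
      exact hasDerivAt_const _ _
  have hS : HasDerivAt (fun t : ℝ =>
      ∑ j, Real.exp ((Real.log (Function.update θ i t j) + z j) / τ))
      (Real.exp ((Real.log (θ i) + z i) / τ) * (1 / (τ * t0))) t0 := by
    have h2 : HasDerivAt (fun t : ℝ =>
        ∑ j, Real.exp ((Real.log (Function.update θ i t j) + z j) / τ))
        (∑ j, if j = i then Real.exp ((Real.log (θ i) + z i) / τ) * (1 / (τ * t0)) else 0) t0 :=
      HasDerivAt.fun_sum (fun j _ => hE j)
    simpa using h2
  have hN : HasDerivAt (fun t : ℝ =>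
      ∑ j, a j * Real.exp ((Real.log (Function.update θ i t j) + z j) / τ))
      (a i * (Real.exp ((Real.log (θ i) + z i) / τ) * (1 / (τ * t0)))) t0 := by
    have h2 : HasDerivAt (fun t : ℝ =>
        ∑ j, a j * Real.exp ((Real.log (Function.update θ i t j) + z j) / τ))
        (∑ j, a j * if j = i then Real.exp ((Real.log (θ i) + z i) / τ) * (1 / (τ * t0)) else 0)
        t0 := HasDerivAt.fun_sum (fun j _ => (hE j).const_mul (a j))
    simpa [mul_ite, mul_zero] using h2
  have hSpos : 0 < ∑ j, Real.exp ((Real.log (θ j) + z j) / τ) := S_pos τ θ z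
  have hS0 : ∀ t : ℝ, (∑ j, Real.exp ((Real.log (Function.update θ i t j) + z j) / τ)) ≠ 0 :=
    fun t => (S_pos τ (Function.update θ i t) z).ne'
  have hdiv := hN.div hS (by simpa using hS0 t0)
  have heq : (fun t : ℝ => hTau τ a (Function.update θ i t) z) = fun t =>
      (∑ j, a j * Real.exp ((Real.log (Function.update θ i t j) + z j) / τ)) /
      ∑ j, Real.exp ((Real.log (Function.update θ i t j) + z j) / τ) := by
    funext t; exact hTau_eq_div τ a _ z
  rw [heq]
  refine hdiv.congr_deriv ?_
  have hupd : Function.update θ i t0 = θ := Function.update_eq_self i θ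
  rw [hupd]
  rw [softW, hTau_eq_div]
  have hτθ : τ * θ i ≠ 0 := mul_ne_zero hτ hθi.ne'
  field_simp


/-- Single-sample Smoothed-Autodiff gradient `∂_{θ_i} G(h_τ(z,θ))`. -/
noncomputable def saGrad {m : ℕ} (τ : ℝ) (a : Fin m → ℝ) (G : ℝ → ℝ)
    (θ : Fin m → ℝ) (i : Fin m) (z : Fin m → ℝ) : ℝ :=
  deriv (fun t : ℝ => G (hTau τ a (Function.update θ i t) z)) (θ i)

lemma softW_nonneg {m : ℕ} [NeZero m] (τ : ℝ) (θ z : Fin m → ℝ) (i : Fin m) :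
    0 ≤ softW τ θ z i :=
  div_nonneg (Real.exp_pos _).le (S_pos τ θ z).le

lemma softW_le_one {m : ℕ} [NeZero m] (τ : ℝ) (θ z : Fin m → ℝ) (i : Fin m) :
    softW τ θ z i ≤ 1 := by
  rw [softW, div_le_one (S_pos τ θ z)]
  exact Finset.single_le_sum (f := fun j => Real.exp ((Real.log (θ j) + z j) / τ))
    (fun j _ => (Real.exp_pos _).le) (Finset.mem_univ i)

lemma softW_sum {m : ℕ} [NeZero m] (τ : ℝ) (θ z : Fin m → ℝ) :
    ∑ i, softW τ θ z i = 1 := by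
  simp only [softW]
  rw [← Finset.sum_div]
  exact div_self (S_pos τ θ z).ne'

lemma hTau_mem_convexHull {m : ℕ} [NeZero m] (τ : ℝ) (a θ z : Fin m → ℝ) :
    hTau τ a θ z ∈ convexHull ℝ (Set.range a) := by
  have h := Finset.centerMass_mem_convexHull (Finset.univ : Finset (Fin m))
    (w := fun i => softW τ θ z i) (fun i _ => softW_nonneg τ θ z i)
    (by rw [softW_sum]; norm_num) (z := a) (fun i _ => Set.mem_range_self i)
  rwa [Finset.centerMass_eq_of_sum_1 _ _ (softW_sum τ θ z), show
    (∑ i, softW τ θ z i • a i) = hTau τ a θ z from by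
      rw [hTau]; exact Finset.sum_congr rfl fun i _ => by rw [smul_eq_mul, mul_comm]] at h
  
lemma hTau_abs_le {m : ℕ} [NeZero m] (τ : ℝ) (a θ z : Fin m → ℝ) :
    |hTau τ a θ z| ≤ ∑ j, |a j| := by
  rw [hTau]
  calc |∑ i, a i * softW τ θ z i| ≤ ∑ i, |a i * softW τ θ z i| := Finset.abs_sum_le_sum_abs _ _
    _ ≤ ∑ j, |a j| := Finset.sum_le_sum fun j _ => by
        rw [abs_mul]
        nth_rewrite 2 [← mul_one |a j|]
        exact mul_le_mul_of_nonneg_left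
          (by rw [abs_of_nonneg (softW_nonneg τ θ z j)]; exact softW_le_one τ θ z j) (abs_nonneg _)

lemma saGrad_eq {m : ℕ} [NeZero m] (τ : ℝ) (hτ : τ ≠ 0) (a : Fin m → ℝ) (G : ℝ → ℝ)
    (hG : Differentiable ℝ G) (θ : Fin m → ℝ) (i : Fin m) (hθi : 0 < θ i) (z : Fin m → ℝ) :
    saGrad τ a G θ i z = deriv G (hTau τ a θ z) *
      (softW τ θ z i / (τ * θ i) * (a i - hTau τ a θ z)) := by
  have hD := hTau_hasDerivAt τ hτ a θ z i hθi
  have hDG := (hG _).hasDerivAt.comp (θ i) hD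
  rw [saGrad]
  have hc : (fun t : ℝ => G (hTau τ a (Function.update θ i t) z)) =
      G ∘ fun t => hTau τ a (Function.update θ i t) z := rfl
  rw [hc, hDG.deriv, Function.update_eq_self]


lemma continuous_hTau_z {m : ℕ} [NeZero m] (τ : ℝ) (a θ : Fin m → ℝ) :
    Continuous fun z : Fin m → ℝ => hTau τ a θ z := by
  have hS : Continuous fun z : Fin m → ℝ => ∑ j, Real.exp ((Real.log (θ j) + z j) / τ) :=
    continuous_finset_sum _ fun j _ => by fun_prop
  have hW : ∀ i : Fin m, Continuous fun z : Fin m → ℝ => softW τ θ z i := fun i =>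
    (show Continuous fun z : Fin m → ℝ => Real.exp ((Real.log (θ i) + z i) / τ) by fun_prop).div hS
      fun z => (S_pos τ θ z).ne'
  exact continuous_finset_sum _ fun i _ => continuous_const.mul (hW i)

lemma continuous_softW_z {m : ℕ} [NeZero m] (τ : ℝ) (θ : Fin m → ℝ) (i : Fin m) :
    Continuous fun z : Fin m → ℝ => softW τ θ z i := by
  have hS : Continuous fun z : Fin m → ℝ => ∑ j, Real.exp ((Real.log (θ j) + z j) / τ) :=
    continuous_finset_sum _ fun j _ => by fun_prop
  exact (show Continuous fun z : Fin m → ℝ => Real.exp ((Real.log (θ i) + z i) / τ) by fun_prop).div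
    hS fun z => (S_pos τ θ z).ne'

lemma saGrad_measurable {m : ℕ} [NeZero m] (τ : ℝ) (hτ : τ ≠ 0) (a : Fin m → ℝ) (G : ℝ → ℝ)
    (hG : Differentiable ℝ G) (θ : Fin m → ℝ) (i : Fin m) (hθi : 0 < θ i) :
    Measurable (saGrad τ a G θ i) := by
  have : saGrad τ a G θ i = fun z => deriv G (hTau τ a θ z) *
      (softW τ θ z i / (τ * θ i) * (a i - hTau τ a θ z)) :=
    funext fun z => saGrad_eq τ hτ a G hG θ i hθi z
  rw [this]
  exact ((measurable_deriv G).comp (continuous_hTau_z τ a θ).measurable).mul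
    ((((continuous_softW_z τ θ i).measurable).div_const _).mul
      (measurable_const.sub (continuous_hTau_z τ a θ).measurable))

lemma saGrad_bound {m : ℕ} [NeZero m] (τ : ℝ) (hτ : 0 < τ) (a : Fin m → ℝ) (G : ℝ → ℝ)
    (hG : Differentiable ℝ G) (Gbar : ℝ)
    (hG' : ∀ x ∈ convexHull ℝ (Set.range a), |deriv G x| ≤ Gbar)
    (θ : Fin m → ℝ) (i : Fin m) (hθi : 0 < θ i) (z : Fin m → ℝ) :
    |saGrad τ a G θ i z| ≤ Gbar * (2 * ∑ j, |a j|) / (θ i) / τ := by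
  rw [saGrad_eq τ hτ.ne' a G hG θ i hθi z]
  have hGb : |deriv G (hTau τ a θ z)| ≤ Gbar := hG' _ (hTau_mem_convexHull τ a θ z)
  have hGb0 : (0:ℝ) ≤ Gbar := le_trans (abs_nonneg _) hGb
  have hτθ : 0 < τ * θ i := mul_pos hτ hθi
  have hW : |softW τ θ z i / (τ * θ i)| ≤ 1 / (τ * θ i) := by
    rw [abs_div, abs_of_pos hτθ]
    exact (div_le_div_iff_of_pos_right hτθ).mpr (by
      rw [abs_of_nonneg (softW_nonneg τ θ z i)]; exact softW_le_one τ θ z i)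
  have hA : |a i| ≤ ∑ j, |a j| :=
    Finset.single_le_sum (f := fun j => |a j|) (fun j _ => abs_nonneg _) (Finset.mem_univ i)
  have hd : |a i - hTau τ a θ z| ≤ 2 * ∑ j, |a j| := by
    calc |a i - hTau τ a θ z| ≤ |a i| + |hTau τ a θ z| := abs_sub _ _
      _ ≤ 2 * ∑ j, |a j| := by
          have := hTau_abs_le τ a θ z
          linarith
  calc |deriv G (hTau τ a θ z) * (softW τ θ z i / (τ * θ i) * (a i - hTau τ a θ z))|
      = |deriv G (hTau τ a θ z)| * (|softW τ θ z i / (τ * θ i)| * |a i - hTau τ a θ z|) := by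
        rw [abs_mul, abs_mul]
    _ ≤ Gbar * ((1 / (τ * θ i)) * (2 * ∑ j, |a j|)) := by
        apply mul_le_mul hGb _ (mul_nonneg (abs_nonneg _) (abs_nonneg _)) hGb0
        exact mul_le_mul hW hd (abs_nonneg _) (by positivity)
    _ = Gbar * (2 * ∑ j, |a j|) / (θ i) / τ := by
        rw [one_div_mul_eq_div, ← mul_div_assoc, div_div, mul_comm (θ i) τ]


/-- `Var_Z(∂_{θ_i} G(h_τ(Z,θ))) = E_Z[(∂_{θ_i} G(h_τ(Z,θ)))²] − (E_Z[∂_{θ_i} G(h_τ(Z,θ))])²`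
for `Z` with i.i.d. Gumbel(0,1) coordinates. -/
noncomputable def saVar {m : ℕ} (τ : ℝ) (a : Fin m → ℝ) (G : ℝ → ℝ)
    (θ : Fin m → ℝ) (i : Fin m) : ℝ :=
  (∫ z, (saGrad τ a G θ i z) ^ 2 ∂(gumbelPi m)) -
    (∫ z, saGrad τ a G θ i z ∂(gumbelPi m)) ^ 2

/-- With `Z` having i.i.d. Gumbel(0,1) coordinates: for every coordinate `i`,
`Var_Z(∂_{θ_i} G(h_τ(Z,θ))) → 0` as `τ → ∞`. -/
theorem smoothed_autodiff_variance_limit {m : ℕ} (hm : 2 ≤ m) (a : Fin m → ℝ)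
    (G : ℝ → ℝ) (hG : Differentiable ℝ G) (Gbar : ℝ)
    (hG' : ∀ x ∈ convexHull ℝ (Set.range a), |deriv G x| ≤ Gbar)
    (θ : Fin m → ℝ) (hθ : ∀ j, 0 < θ j) (i : Fin m) :
    Tendsto (fun τ : ℝ => saVar τ a G θ i) atTop (nhds 0) := by
  have : NeZero m := ⟨by omega⟩
  set C := Gbar * (2 * ∑ j, |a j|) / θ i with hC
  have hGb0 : 0 ≤ Gbar :=
    le_trans (abs_nonneg _) (hG' _ (subset_convexHull ℝ _ (Set.mem_range_self i)))
  have hC0 : 0 ≤ C :=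
    div_nonneg (mul_nonneg hGb0 (by positivity)) (hθ i).le
  have key : ∀ τ : ℝ, 0 < τ → |saVar τ a G θ i| ≤ (C / τ) ^ 2 := by
    intro τ hτ
    set f := saGrad τ a G θ i with hf
    have hmeas := saGrad_measurable τ hτ.ne' a G hG θ i (hθ i)
    have hbd : ∀ z, |f z| ≤ C / τ := fun z => saGrad_bound τ hτ a G hG Gbar hG' θ i (hθ i) z
    have hK0 : 0 ≤ C / τ := div_nonneg hC0 hτ.le
    have hint : Integrable f (gumbelPi m) :=
      (integrable_const (C / τ)).mono' hmeas.aestronglyMeasurable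
        (Filter.Eventually.of_forall fun z => by simpa [Real.norm_eq_abs] using hbd z)
    have hint2 : Integrable (fun z => f z ^ 2) (gumbelPi m) :=
      (integrable_const ((C / τ) ^ 2)).mono' (hmeas.pow_const 2).aestronglyMeasurable
        (Filter.Eventually.of_forall fun z => by
          rw [Real.norm_eq_abs, abs_pow, sq_abs, ← sq_abs]
          exact pow_le_pow_left₀ (abs_nonneg _) (hbd z) 2)
    have h2le : (∫ z, f z ^ 2 ∂(gumbelPi m)) ≤ (C / τ) ^ 2 := by
      calc (∫ z, f z ^ 2 ∂(gumbelPi m)) ≤ ∫ _, (C / τ) ^ 2 ∂(gumbelPi m) :=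
            integral_mono hint2 (integrable_const _) (fun z => by
              rw [← sq_abs]; exact pow_le_pow_left₀ (abs_nonneg _) (hbd z) 2)
        _ = (C / τ) ^ 2 := by simp
    have h2nn : 0 ≤ ∫ z, f z ^ 2 ∂(gumbelPi m) := integral_nonneg fun z => sq_nonneg _
    have h1le : |∫ z, f z ∂(gumbelPi m)| ≤ C / τ := by
      have := norm_integral_le_of_norm_le_const (μ := gumbelPi m) (f := f) (C := C / τ)
        (Filter.Eventually.of_forall fun z => by simpa [Real.norm_eq_abs] using hbd z)
      simpa [Real.norm_eq_abs] using this
    have h1sq : (∫ z, f z ∂(gumbelPi m)) ^ 2 ≤ (C / τ) ^ 2 := by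
      rw [← sq_abs]; exact pow_le_pow_left₀ (abs_nonneg _) h1le 2
    have h1nn : 0 ≤ (∫ z, f z ∂(gumbelPi m)) ^ 2 := sq_nonneg _
    rw [saVar, abs_le]
    constructor <;> [linarith; linarith]
  have hg : Tendsto (fun τ : ℝ => (C / τ) ^ 2) atTop (nhds 0) := by
    have h2 : Tendsto (fun τ : ℝ => C ^ 2 / τ ^ 2) atTop (nhds 0) :=
      Tendsto.div_atTop tendsto_const_nhds (tendsto_pow_atTop two_ne_zero)
    simpa [div_pow] using h2
  refine squeeze_zero_norm' ?_ hg
  filter_upwards [eventually_gt_atTop 0] with τ hτ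
  simpa [Real.norm_eq_abs] using key τ hτ
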